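/- Let H and S be disjoint subgraphs of a graph G, and let α, β ≥ 0 be integers such that either α + 3β ≤ 9 or (α, β) = (1,3). Suppose H is configurable and S is either a path of length at least two or an (α,β)-star with α + β ≥ 3. If every vertex of S of degree one in S is adjacent in G to some vertex of H, then the subgraph of G induced by V(H) ∪ V(S) is configurable. -/

import Mathlib

open SimpleGraph

/-- `f` is a configuration on `G`. -/
def IsConfig {V : Type*} (G : SimpleGraph V) (f : V → Finset (Fin 5)) : Prop :=
  (∀ v, (f v).card = 2) ∧
  ∀ (v : V) (c : Fin 5), ∃ u, (u = v ∨ G.Adj u v) ∧ c ∈ f u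

/-- A graph is configurable if it admits a configuration. -/
def Configurable {V : Type*} (G : SimpleGraph V) : Prop :=
  ∃ f : V → Finset (Fin 5), IsConfig G f

/-- The `(α,β)`-star: a center `w = Sum.inl ()`, leaves `x i = Sum.inr (Sum.inl i)`,
and paths `w — y j — z j` where `y j = Sum.inr (Sum.inr (Sum.inl j))` and
`z j = Sum.inr (Sum.inr (Sum.inr j))`. -/
def starGraph (α β : ℕ) : SimpleGraph (Unit ⊕ Fin α ⊕ Fin β ⊕ Fin β) :=
  SimpleGraph.fromEdgeSet
    ({e | ∃ i : Fin α, e = s(Sum.inl (), Sum.inr (Sum.inl i))} ∪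
     {e | ∃ j : Fin β, e = s(Sum.inl (), Sum.inr (Sum.inr (Sum.inl j)))} ∪
     {e | ∃ j : Fin β, e = s(Sum.inr (Sum.inr (Sum.inl j)), Sum.inr (Sum.inr (Sum.inr j)))})


section AuxiliaryLemmas
open Finset

abbrev C5 := Finset (Fin 5)

set_option maxHeartbeats 2000000 in
/-- Prescribed-tail path lemma. -/
lemma slem : ∀ n, 5 ≤ n → ∀ P0 A B : C5, P0.card = 2 → A.card = 2 → B.card = 2 →
    Disjoint A B →
    ∃ g : ℕ → C5, (∀ i, (g i).card = 2) ∧ (g 0 ∪ g 1 ∪ P0 = univ) ∧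
      (∀ i, 1 ≤ i → i ≤ n - 2 → g (i-1) ∪ g i ∪ g (i+1) = univ) ∧
      g (n-2) = A ∧ g (n-1) = B := by
  intro n hn
  induction n, hn using Nat.le_induction with
  | base =>
    intro P0 A B hP0 hA hB hAB
    obtain ⟨a1, a2, ha12, rfl⟩ := Finset.card_eq_two.mp hA
    obtain ⟨b1, b2, hb12, rfl⟩ := Finset.card_eq_two.mp hB
    have hcompl : (({a1,a2} ∪ {b1,b2} : C5)ᶜ).card = 1 := by
      rw [Finset.card_compl, Finset.card_union_of_disjoint hAB, Finset.card_pair ha12,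
        Finset.card_pair hb12]; simp
    obtain ⟨m, hm⟩ := Finset.card_eq_one.mp hcompl
    have hmAB : m ∉ ({a1,a2} ∪ {b1,b2} : C5) := by
      rw [← Finset.mem_compl, hm]; exact Finset.mem_singleton_self m
    simp only [Finset.mem_union, Finset.mem_insert, Finset.mem_singleton, not_or] at hmAB
    obtain ⟨⟨hma1, hma2⟩, hmb1, hmb2⟩ := hmAB
    have hd := Finset.disjoint_left.mp hAB
    have hab : ∀ x ∈ ({a1,a2} : C5), ∀ y ∈ ({b1,b2} : C5), x ≠ y := by
      intro x hx y hy h; exact (hd hx (h ▸ hy) : False) |>.elim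
    have ha1b1 : a1 ≠ b1 := hab a1 (by simp) b1 (by simp)
    have ha1b2 : a1 ≠ b2 := hab a1 (by simp) b2 (by simp)
    have ha2b1 : a2 ≠ b1 := hab a2 (by simp) b1 (by simp)
    have ha2b2 : a2 ≠ b2 := hab a2 (by simp) b2 (by simp)
    have huniv : ∀ c : Fin 5, c = a1 ∨ c = a2 ∨ c = b1 ∨ c = b2 ∨ c = m := by
      intro c
      by_contra hc
      push_neg at hc
      obtain ⟨h1, h2, h3, h4, h5⟩ := hc
      have : c ∈ (({a1,a2} ∪ {b1,b2} : C5))ᶜ := by simp [h1, h2, h3, h4]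
      rw [hm] at this; simp at this; exact h5 this
    -- choose g0 g1 g2 by cases on P0
    have main : ∃ g0 g1 g2 : C5, g0.card = 2 ∧ g1.card = 2 ∧ g2.card = 2 ∧
        g0 ∪ g1 ∪ P0 = univ ∧ g0 ∪ g1 ∪ g2 = univ ∧
        g1 ∪ g2 ∪ {a1,a2} = univ ∧ g2 ∪ {a1,a2} ∪ {b1,b2} = univ := by
      by_cases h1 : a1 ∈ P0
      · refine ⟨{m,a2}, {b1,b2}, {m,a1}, Finset.card_pair hma2, Finset.card_pair hb12,
          Finset.card_pair hma1, ?_, ?_, ?_, ?_⟩ <;>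
          (apply Finset.eq_univ_iff_forall.mpr; intro c;
            rcases huniv c with rfl|rfl|rfl|rfl|rfl <;>
              (simp only [Finset.mem_union, Finset.mem_insert, Finset.mem_singleton]; tauto))
      · by_cases h2 : m ∈ P0
        · refine ⟨{a2,b1}, {a1,b2}, {m,b1}, Finset.card_pair ha2b1, Finset.card_pair ha1b2,
            Finset.card_pair hmb1, ?_, ?_, ?_, ?_⟩ <;>
            (apply Finset.eq_univ_iff_forall.mpr; intro c;
              rcases huniv c with rfl|rfl|rfl|rfl|rfl <;>
              (simp only [Finset.mem_union, Finset.mem_insert, Finset.mem_singleton]; tauto))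
        · by_cases h3 : b1 ∈ P0
          · refine ⟨{a1,a2}, {m,b2}, {m,b1}, Finset.card_pair ha12, Finset.card_pair hmb2,
              Finset.card_pair hmb1, ?_, ?_, ?_, ?_⟩ <;>
              (apply Finset.eq_univ_iff_forall.mpr; intro c;
                rcases huniv c with rfl|rfl|rfl|rfl|rfl <;>
              (simp only [Finset.mem_union, Finset.mem_insert, Finset.mem_singleton]; tauto))
          · by_cases h4 : b2 ∈ P0
            · refine ⟨{a1,a2}, {m,b1}, {m,b2}, Finset.card_pair ha12, Finset.card_pair hmb1,
                Finset.card_pair hmb2, ?_, ?_, ?_, ?_⟩ <;>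
                (apply Finset.eq_univ_iff_forall.mpr; intro c;
                  rcases huniv c with rfl|rfl|rfl|rfl|rfl <;>
              (simp only [Finset.mem_union, Finset.mem_insert, Finset.mem_singleton]; tauto))
            · exfalso
              have hsub : P0 ⊆ {a2} := by
                intro c hc
                rcases huniv c with rfl|rfl|rfl|rfl|rfl
                · exact absurd hc h1
                · simp
                · exact absurd hc h3
                · exact absurd hc h4
                · exact absurd hc h2
              have := Finset.card_le_card hsub
              simp [hP0] at this
    obtain ⟨g0, g1, g2, hg0, hg1, hg2, hc0, hc1, hc2, hc3⟩ := main
    refine ⟨fun i => if i = 0 then g0 else if i = 1 then g1 else if i = 2 then g2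
      else if i = 3 then {a1,a2} else {b1,b2}, ?_, ?_, ?_, ?_, ?_⟩
    · intro i
      dsimp only
      split_ifs <;> first | assumption | exact Finset.card_pair ha12 | exact Finset.card_pair hb12
    · simpa using hc0
    · intro i hi1 hi2
      interval_cases i
      · simpa using hc1
      · simpa using hc2
      · simpa using hc3
    · norm_num
    · norm_num
  | succ n hn ih =>
    intro P0 A B hP0 hA hB hAB
    have h4 : ((A ∪ B : C5)).card = 4 := by
      rw [Finset.card_union_of_disjoint hAB, hA, hB]
    have hcompl : ((A ∪ B : C5)ᶜ).card = 1 := by rw [Finset.card_compl, h4]; simp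
    obtain ⟨m, hm⟩ := Finset.card_eq_one.mp hcompl
    have hmAB : m ∉ (A ∪ B : C5) := by
      rw [← Finset.mem_compl, hm]; exact Finset.mem_singleton_self m
    simp only [Finset.mem_union, not_or] at hmAB
    obtain ⟨hmA, hmB⟩ := hmAB
    obtain ⟨b, hb⟩ := Finset.card_pos.mp (by rw [hB]; norm_num : 0 < B.card)
    have hmb : m ≠ b := fun h => hmB (h ▸ hb)
    have hA'card : ({m, b} : C5).card = 2 := Finset.card_pair hmb
    have hdisj' : Disjoint ({m, b} : C5) A := by
      rw [Finset.disjoint_left]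
      intro x hx hxA
      rcases Finset.mem_insert.mp hx with rfl | hx'
      · exact hmA hxA
      · rw [Finset.mem_singleton] at hx'
        exact Finset.disjoint_left.mp hAB hxA (hx' ▸ hb)
    obtain ⟨g, hgc, hg0, hgi, hgn2, hgn1⟩ := ih P0 {m,b} A hP0 hA'card hA hdisj'
    refine ⟨fun i => if i = n then B else g i, ?_, ?_, ?_, ?_, ?_⟩
    · intro i; dsimp only; split_ifs with h
      · exact hB
      · exact hgc i
    · have h0 : (0:ℕ) ≠ n := by omega
      have h1 : (1:ℕ) ≠ n := by omega
      simpa [h0, h1] using hg0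
    · intro i hi1 hi2
      rcases Nat.lt_or_ge i (n-1) with hlt | hge
      · have e1 : i - 1 ≠ n := by omega
        have e2 : i ≠ n := by omega
        have e3 : i + 1 ≠ n := by omega
        simpa [e1, e2, e3] using hgi i hi1 (by omega)
      · have hieq : i = n - 1 := by omega
        subst hieq
        have e1 : n - 1 - 1 = n - 2 := by omega
        have e2 : n - 1 ≠ n := by omega
        have e3 : n - 1 - 1 ≠ n := by omega
        have e4 : n - 1 + 1 = n := by omega
        rw [e4]
        simp only [e2, e3, if_neg, if_pos, e1, hgn2, hgn1]
        -- {m,b} ∪ A ∪ B = univ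
        apply Finset.eq_univ_iff_forall.mpr
        intro c
        by_cases hc : c ∈ (A ∪ B : C5)
        · rcases Finset.mem_union.mp hc with h | h <;> simp [h]
        · have : c ∈ ((A ∪ B : C5))ᶜ := Finset.mem_compl.mpr hc
          rw [hm] at this
          simp at this
          simp [this, show n - 2 ≠ n by omega]
    · have e : n + 1 - 2 = n - 1 := by omega
      have e2 : n - 1 ≠ n := by omega
      simp [e, e2, hgn1]
    · simp

set_option maxHeartbeats 1000000 in
lemma pathLemma (n : ℕ) (hn : 3 ≤ n) (P0 P1 : C5) (hP0 : P0.card = 2) (hP1 : P1.card = 2) :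
    ∃ g : ℕ → C5, (∀ i, (g i).card = 2) ∧ (g 0 ∪ g 1 ∪ P0 = univ) ∧
      (∀ i, 1 ≤ i → i ≤ n - 2 → g (i-1) ∪ g i ∪ g (i+1) = univ) ∧
      (g (n-2) ∪ g (n-1) ∪ P1 = univ) := by
  rcases Nat.lt_or_ge n 5 with h5 | h5
  · -- n = 3 or 4
    have key : ∀ p : Fin 5, ∀ P : C5, p ∈ P → ({p} : C5)ᶜ ∪ P = univ := by
      intro p P hp
      apply Finset.eq_univ_iff_forall.mpr
      intro c
      by_cases hc : c = p
      · exact Finset.mem_union_right _ (hc ▸ hp)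
      · exact Finset.mem_union_left _ (by simp [hc])
    interval_cases n
    · -- n = 3
      by_cases hpq : ∃ p, p ∈ P0 ∧ p ∈ P1
      · obtain ⟨p, hpP0, hpP1⟩ := hpq
        have hc3 : (P1ᶜ).card = 3 := by rw [Finset.card_compl, hP1]; simp
        obtain ⟨r1, r2, r3, h12, h13, h23, hP1c⟩ := Finset.card_eq_three.mp hc3
        have hr : ∀ r ∈ ({r1,r2,r3} : C5), r ≠ p := by
          intro r hrm h
          have : r ∈ P1ᶜ := hP1c ▸ hrm
          exact (Finset.mem_compl.mp this) (h ▸ hpP1)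
        have hr1 := hr r1 (by simp)
        have hr2 := hr r2 (by simp)
        have hr3 := hr r3 (by simp)
        have hsub : ({r1,r2} : C5) ⊆ ({p} : C5)ᶜ := by
          intro c hc
          simp only [Finset.mem_insert, Finset.mem_singleton] at hc
          rcases hc with rfl | rfl <;> simp [hr1, hr2]
        refine ⟨fun i => if i = 0 then (({p} : C5)ᶜ \ {r1,r2}) else if i = 1 then {r1,r2}
          else {p,r3}, ?_, ?_, ?_, ?_⟩
        · intro i; dsimp only; split_ifs
          · rw [Finset.card_sdiff_of_subset hsub, Finset.card_compl]
            rw [Finset.card_pair h12]; simp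
          · exact Finset.card_pair h12
          · exact Finset.card_pair (Ne.symm (hr3))
        · show (({p} : C5)ᶜ \ {r1,r2}) ∪ {r1,r2} ∪ P0 = univ
          rw [Finset.sdiff_union_of_subset hsub]
          exact key p P0 hpP0
        · intro i h1 h2
          have : i = 1 := by omega
          subst this
          show (({p} : C5)ᶜ \ {r1,r2}) ∪ {r1,r2} ∪ {p,r3} = univ
          rw [Finset.sdiff_union_of_subset hsub]
          exact key p {p,r3} (by simp)
        · show ({r1,r2} : C5) ∪ {p,r3} ∪ P1 = univ
          apply Finset.eq_univ_iff_forall.mpr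
          intro c
          by_cases hc : c ∈ P1
          · exact Finset.mem_union_right _ hc
          · have : c ∈ P1ᶜ := Finset.mem_compl.mpr hc
            rw [hP1c] at this
            simp only [Finset.mem_insert, Finset.mem_singleton] at this
            rcases this with rfl | rfl | rfl <;> simp
      · push_neg at hpq
        have hdisj : Disjoint P0 P1 := Finset.disjoint_left.mpr hpq
        obtain ⟨p1, p2, hp12, hP0e⟩ := Finset.card_eq_two.mp hP0
        have hcompl : ((P0 ∪ P1 : C5)ᶜ).card = 1 := by
          rw [Finset.card_compl, Finset.card_union_of_disjoint hdisj, hP0, hP1]; simp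
        obtain ⟨m, hm⟩ := Finset.card_eq_one.mp hcompl
        have hmP : m ∉ (P0 ∪ P1 : C5) := by
          rw [← Finset.mem_compl, hm]; exact Finset.mem_singleton_self m
        simp only [Finset.mem_union, not_or] at hmP
        obtain ⟨hmP0, hmP1⟩ := hmP
        have hmp1 : m ≠ p1 := fun h => hmP0 (h ▸ (hP0e ▸ by simp))
        have hmp2 : m ≠ p2 := fun h => hmP0 (h ▸ (hP0e ▸ by simp))
        have huniv : ∀ c : Fin 5, c ∈ P0 ∨ c ∈ P1 ∨ c = m := by
          intro c
          by_cases h0 : c ∈ P0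
          · exact Or.inl h0
          by_cases h1 : c ∈ P1
          · exact Or.inr (Or.inl h1)
          right; right
          have : c ∈ (P0 ∪ P1 : C5)ᶜ := by simp [h0, h1]
          rw [hm] at this; simpa using this
        refine ⟨fun i => if i = 0 then P1 else if i = 1 then {m,p1} else {p2,m}, ?_, ?_, ?_, ?_⟩
        · intro i; dsimp only; split_ifs
          · exact hP1
          · exact Finset.card_pair hmp1
          · exact Finset.card_pair (Ne.symm hmp2)
        · show P1 ∪ {m,p1} ∪ P0 = univ
          apply Finset.eq_univ_iff_forall.mpr
          intro c
          rcases huniv c with h | h | rfl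
          · simp [h]
          · simp [h]
          · simp
        · intro i h1 h2
          have : i = 1 := by omega
          subst this
          show P1 ∪ {m,p1} ∪ {p2,m} = univ
          apply Finset.eq_univ_iff_forall.mpr
          intro c
          rcases huniv c with h | h | rfl
          · rw [hP0e] at h
            simp only [Finset.mem_insert, Finset.mem_singleton] at h
            rcases h with rfl | rfl <;> simp
          · simp [h]
          · simp
        · show ({m,p1} : C5) ∪ {p2,m} ∪ P1 = univ
          apply Finset.eq_univ_iff_forall.mpr
          intro c
          rcases huniv c with h | h | rfl
          · rw [hP0e] at h
            simp only [Finset.mem_insert, Finset.mem_singleton] at h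
            rcases h with rfl | rfl <;> simp
          · simp [h]
          · simp
    · -- n = 4
      obtain ⟨q1, q2, hq12, hP1e⟩ := Finset.card_eq_two.mp hP1
      obtain ⟨p, hpP0⟩ := Finset.card_pos.mp (by rw [hP0]; norm_num : 0 < P0.card)
      set q : Fin 5 := if p = q1 then q2 else q1 with hqdef
      have hqP1 : q ∈ P1 := by
        rw [hP1e]; rw [hqdef]; split_ifs <;> simp
      have hpq : p ≠ q := by
        rw [hqdef]; split_ifs with h
        · rw [h]; exact hq12
        · exact h
      have hx : (({p,q} : C5)ᶜ).card = 3 := by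
        rw [Finset.card_compl, Finset.card_pair hpq]; simp
      obtain ⟨x, hxm⟩ := Finset.card_pos.mp (by rw [hx]; norm_num : 0 < (({p,q} : C5)ᶜ).card)
      have hxp : x ≠ p := by
        intro h; rw [Finset.mem_compl] at hxm; exact hxm (by simp [h])
      have hxq : x ≠ q := by
        intro h; rw [Finset.mem_compl] at hxm; exact hxm (by simp [h])
      have hsub1 : ({q,x} : C5) ⊆ ({p} : C5)ᶜ := by
        intro c hc
        simp only [Finset.mem_insert, Finset.mem_singleton] at hc
        rcases hc with rfl | rfl <;> simp [Ne.symm hpq, hxp]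
      have hsub2 : ({p,x} : C5) ⊆ ({q} : C5)ᶜ := by
        intro c hc
        simp only [Finset.mem_insert, Finset.mem_singleton] at hc
        rcases hc with rfl | rfl <;> simp [hpq, hxq]
      refine ⟨fun i => if i = 0 then (({p} : C5)ᶜ \ {q,x}) else if i = 1 then {q,x}
        else if i = 2 then {p,x} else (({q} : C5)ᶜ \ {p,x}), ?_, ?_, ?_, ?_⟩
      · intro i; dsimp only; split_ifs
        · rw [Finset.card_sdiff_of_subset hsub1, Finset.card_compl, Finset.card_pair (Ne.symm hxq)]; simp
        · exact Finset.card_pair (Ne.symm hxq)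
        · exact Finset.card_pair (Ne.symm hxp)
        · rw [Finset.card_sdiff_of_subset hsub2, Finset.card_compl, Finset.card_pair (Ne.symm hxp)]; simp
      · show (({p} : C5)ᶜ \ {q,x}) ∪ {q,x} ∪ P0 = univ
        rw [Finset.sdiff_union_of_subset hsub1]
        exact key p P0 hpP0
      · intro i h1 h2
        interval_cases i
        · show (({p} : C5)ᶜ \ {q,x}) ∪ {q,x} ∪ {p,x} = univ
          rw [Finset.sdiff_union_of_subset hsub1]
          exact key p {p,x} (by simp)
        · show ({q,x} : C5) ∪ {p,x} ∪ (({q} : C5)ᶜ \ {p,x}) = univ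
          rw [Finset.union_assoc, Finset.union_sdiff_of_subset hsub2]
          rw [Finset.union_comm]
          exact key q {q,x} (by simp)
      · show ({p,x} : C5) ∪ (({q} : C5)ᶜ \ {p,x}) ∪ P1 = univ
        rw [Finset.union_sdiff_of_subset hsub2]
        exact key q P1 hqP1
  · -- n ≥ 5
    obtain ⟨m, hmP1⟩ := Finset.card_pos.mp (by rw [hP1]; norm_num : 0 < P1.card)
    have hT : (({m} : C5)ᶜ).card = 4 := by
      rw [Finset.card_compl, Finset.card_singleton]; simp
    obtain ⟨A, -, hAT, hA⟩ := Finset.exists_subsuperset_card_eq (n := 2)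
      (Finset.empty_subset (({m} : C5)ᶜ)) (by simp) (by rw [hT]; norm_num)
    have hB : ((({m} : C5)ᶜ) \ A).card = 2 := by
      rw [Finset.card_sdiff_of_subset hAT, hT, hA]
    have hdisj : Disjoint A ((({m} : C5)ᶜ) \ A) := Finset.disjoint_sdiff
    obtain ⟨g, hgc, hg0, hgi, hgn2, hgn1⟩ := slem n h5 P0 A _ hP0 hA hB hdisj
    refine ⟨g, hgc, hg0, hgi, ?_⟩
    rw [hgn2, hgn1]
    apply Finset.eq_univ_iff_forall.mpr
    intro c
    simp only [Finset.mem_union, Finset.mem_sdiff, Finset.mem_compl, Finset.mem_singleton]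
    by_cases hc : c = m
    · exact Or.inr (hc ▸ hmP1)
    · by_cases hcA : c ∈ A
      · exact Or.inl (Or.inl hcA)
      · exact Or.inl (Or.inr ⟨hc, hcA⟩)

lemma exists_goodPair {a b : ℕ} (P : Fin a → C5) (Q : Fin b → C5)
    (hQ : ∀ j, (Q j).card = 2) (h : a + 3 * b ≤ 9) :
    ∃ fw : C5, fw.card = 2 ∧ (∀ i, fw ≠ P i) ∧ (∀ j, (fw ∩ Q j).Nonempty) := by
  classical
  set Pairs : Finset C5 := (univ : Finset (Fin 5)).powersetCard 2 with hPairs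
  have hPairsCard : Pairs.card = 10 := by
    rw [hPairs, Finset.card_powersetCard]; simp; rfl
  set Bad : Finset C5 := (univ : Finset (Fin a)).image P ∪
    (univ : Finset (Fin b)).biUnion (fun j => ((Q j)ᶜ).powersetCard 2) with hBad
  have hBadCard : Bad.card ≤ a + 3 * b := by
    calc Bad.card ≤ ((univ : Finset (Fin a)).image P).card +
        ((univ : Finset (Fin b)).biUnion (fun j => ((Q j)ᶜ).powersetCard 2)).card :=
          Finset.card_union_le _ _
      _ ≤ a + 3 * b := by
          gcongr
          · exact le_trans Finset.card_image_le (by simp)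
          · calc ((univ : Finset (Fin b)).biUnion (fun j => ((Q j)ᶜ).powersetCard 2)).card
                ≤ ∑ j : Fin b, (((Q j)ᶜ).powersetCard 2).card := Finset.card_biUnion_le
              _ ≤ ∑ j : Fin b, 3 := by
                  apply Finset.sum_le_sum
                  intro j _
                  rw [Finset.card_powersetCard, Finset.card_compl, hQ j]
                  simp
              _ = 3 * b := by simp [mul_comm]
  have hex : ∃ fw ∈ Pairs, fw ∉ Bad := by
    by_contra hcon
    push_neg at hcon
    have hsub : Pairs ⊆ Bad := hcon
    have := Finset.card_le_card hsub
    omega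
  obtain ⟨fw, hfwP, hfwB⟩ := hex
  rw [hPairs, Finset.mem_powersetCard] at hfwP
  rw [hBad, Finset.mem_union, not_or] at hfwB
  obtain ⟨hfw1, hfw2⟩ := hfwB
  refine ⟨fw, hfwP.2, ?_, ?_⟩
  · intro i h
    exact hfw1 (Finset.mem_image.mpr ⟨i, Finset.mem_univ i, h.symm⟩)
  · intro j
    rw [Finset.mem_biUnion] at hfw2
    push_neg at hfw2
    have := hfw2 j (Finset.mem_univ j)
    rw [Finset.mem_powersetCard] at this
    push_neg at this
    have hns := this
    by_contra hempty
    rw [Finset.not_nonempty_iff_eq_empty] at hempty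
    have hsub : fw ⊆ (Q j)ᶜ := by
      intro c hc
      rw [Finset.mem_compl]
      intro hcQ
      have : c ∈ fw ∩ Q j := Finset.mem_inter.mpr ⟨hc, hcQ⟩
      rw [hempty] at this
      exact absurd this (Finset.notMem_empty c)
    exact (hns hsub) hfwP.2

lemma gp_aux (P A B C : C5) (hP : P.card = 2) (hC : C.card = 2) (hc : (A ∩ B).Nonempty) :
    ∃ fw : C5, fw.card = 2 ∧ fw ≠ P ∧ (fw ∩ A).Nonempty ∧ (fw ∩ B).Nonempty ∧
      (fw ∩ C).Nonempty := by
  obtain ⟨c, hc'⟩ := hc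
  rw [Finset.mem_inter] at hc'
  obtain ⟨hcA, hcB⟩ := hc'
  by_cases hcC : c ∈ C
  · have hcard : ((insert c P)ᶜ).card ≥ 2 := by
      rw [Finset.card_compl]
      have := Finset.card_insert_le c P
      have h5 : Fintype.card (Fin 5) = 5 := by simp
      omega
    obtain ⟨x, hx⟩ := Finset.card_pos.mp (by omega : 0 < ((insert c P)ᶜ).card)
    rw [Finset.mem_compl, Finset.mem_insert, not_or] at hx
    obtain ⟨hxc, hxP⟩ := hx
    refine ⟨{c, x}, Finset.card_pair (Ne.symm hxc), ?_, ⟨c, by simp [hcA]⟩,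
      ⟨c, by simp [hcB]⟩, ⟨c, by simp [hcC]⟩⟩
    intro h
    exact hxP (h ▸ (by simp : x ∈ ({c,x} : C5)))
  · obtain ⟨x1, x2, hx12, hCe⟩ := Finset.card_eq_two.mp hC
    have hcx1 : c ≠ x1 := fun h => hcC (hCe ▸ (h ▸ by simp))
    have hcx2 : c ≠ x2 := fun h => hcC (hCe ▸ (h ▸ by simp))
    by_cases h1 : ({c, x1} : C5) = P
    · refine ⟨{c, x2}, Finset.card_pair hcx2, ?_, ⟨c, by simp [hcA]⟩,
        ⟨c, by simp [hcB]⟩, ⟨x2, by simp [hCe]⟩⟩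
      intro h2
      rw [← h1] at h2
      have : x2 ∈ ({c, x1} : C5) := h2 ▸ (by simp : x2 ∈ ({c,x2} : C5))
      simp only [Finset.mem_insert, Finset.mem_singleton] at this
      rcases this with h | h
      · exact hcx2 h.symm
      · exact hx12 h.symm
    · exact ⟨{c, x1}, Finset.card_pair hcx1, h1, ⟨c, by simp [hcA]⟩,
        ⟨c, by simp [hcB]⟩, ⟨x1, by simp [hCe]⟩⟩

lemma exists_goodPair13 (P Q0 Q1 Q2 : C5) (hP : P.card = 2) (h0 : Q0.card = 2)
    (h1 : Q1.card = 2) (h2 : Q2.card = 2) :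
    ∃ fw : C5, fw.card = 2 ∧ fw ≠ P ∧ (fw ∩ Q0).Nonempty ∧ (fw ∩ Q1).Nonempty ∧
      (fw ∩ Q2).Nonempty := by
  by_cases h01 : (Q0 ∩ Q1).Nonempty
  · obtain ⟨fw, hc, hne, hA, hB, hC⟩ := gp_aux P Q0 Q1 Q2 hP h2 h01
    exact ⟨fw, hc, hne, hA, hB, hC⟩
  by_cases h02 : (Q0 ∩ Q2).Nonempty
  · obtain ⟨fw, hc, hne, hA, hB, hC⟩ := gp_aux P Q0 Q2 Q1 hP h1 h02
    exact ⟨fw, hc, hne, hA, hC, hB⟩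
  by_cases h12 : (Q1 ∩ Q2).Nonempty
  · obtain ⟨fw, hc, hne, hA, hB, hC⟩ := gp_aux P Q1 Q2 Q0 hP h0 h12
    exact ⟨fw, hc, hne, hC, hA, hB⟩
  exfalso
  rw [Finset.not_nonempty_iff_eq_empty, ← Finset.disjoint_iff_inter_eq_empty] at h01 h02 h12
  have hd : Disjoint (Q0 ∪ Q1) Q2 := Finset.disjoint_union_left.mpr ⟨h02, h12⟩
  have hcard : ((Q0 ∪ Q1) ∪ Q2).card = 6 := by
    rw [Finset.card_union_of_disjoint hd, Finset.card_union_of_disjoint h01, h0, h1, h2]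
  have := Finset.card_le_card (Finset.subset_univ ((Q0 ∪ Q1) ∪ Q2))
  rw [hcard] at this
  simp at this

lemma padTo (F T : C5) (h1 : F ⊆ T) (h2 : F.card ≤ 2) (h3 : 2 ≤ T.card) :
    ∃ X, F ⊆ X ∧ X ⊆ T ∧ X.card = 2 := Finset.exists_subsuperset_card_eq h1 h2 h3

lemma compl_card3 (fw : C5) (h : fw.card = 2) : (fwᶜ).card = 3 := by
  rw [Finset.card_compl, h]; rfl

lemma F_props (fw Pi : C5) (hfw : fw.card = 2) (hPi : Pi.card = 2) (hne : fw ≠ Pi) :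
    (Piᶜ \ fw) ⊆ fwᶜ ∧ (Piᶜ \ fw).card ≤ 2 := by
  constructor
  · intro c hc
    rw [Finset.mem_sdiff] at hc
    exact Finset.mem_compl.mpr hc.2
  · have hnsub : ¬ fw ⊆ Pi := fun hsub =>
      hne (Finset.eq_of_subset_of_card_le hsub (by omega))
    obtain ⟨w, hw1, hw2⟩ := Finset.not_subset.mp hnsub
    have hss : (Piᶜ \ fw) ⊂ Piᶜ := by
      refine Finset.ssubset_iff_of_subset Finset.sdiff_subset |>.mpr ⟨w, ?_, ?_⟩
      · exact Finset.mem_compl.mpr hw2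
      · rw [Finset.mem_sdiff]; tauto
    have := Finset.card_lt_card hss
    rw [compl_card3 Pi hPi] at this
    omega

lemma legAssign (fw Qj Y : C5) (hfw : fw.card = 2) (hQj : Qj.card = 2)
    (hmeet : (fw ∩ Qj).Nonempty) (hY : Y ⊆ fwᶜ) (hYc : Y.card = 2) :
    ∃ Z : C5, Z.card = 2 ∧ (∀ c, c ∈ fw ∨ c ∈ Y ∨ c ∈ Z) ∧ (∀ c, c ∈ Y ∨ c ∈ Z ∨ c ∈ Qj) := by
  set R := Qjᶜ ∪ fwᶜ with hR
  have hYR : Y ⊆ R := hY.trans Finset.subset_union_right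
  have hRcard : R.card ≤ 4 := by
    have hR2 : R = (Qj ∩ fw)ᶜ := by rw [hR, Finset.compl_inter]
    have hpos : 0 < (Qj ∩ fw).card := Finset.card_pos.mpr (by
      rw [Finset.inter_comm]; exact hmeet)
    rw [hR2, Finset.card_compl]
    have h5 : Fintype.card (Fin 5) = 5 := by simp
    omega
  have hsd : (R \ Y).card ≤ 2 := by
    rw [Finset.card_sdiff_of_subset hYR]
    omega
  obtain ⟨Z, hZ1, -, hZ3⟩ := padTo (R \ Y) univ (Finset.subset_univ _) hsd (by simp)
  refine ⟨Z, hZ3, ?_, ?_⟩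
  · intro c
    by_cases hc : c ∈ fw
    · exact Or.inl hc
    · have hcR : c ∈ R := Finset.mem_union_right _ (Finset.mem_compl.mpr hc)
      by_cases hcY : c ∈ Y
      · exact Or.inr (Or.inl hcY)
      · exact Or.inr (Or.inr (hZ1 (Finset.mem_sdiff.mpr ⟨hcR, hcY⟩)))
  · intro c
    by_cases hc : c ∈ Qj
    · exact Or.inr (Or.inr hc)
    · have hcR : c ∈ R := Finset.mem_union_left _ (Finset.mem_compl.mpr hc)
      by_cases hcY : c ∈ Y
      · exact Or.inl hcY
      · exact Or.inr (Or.inl (hZ1 (Finset.mem_sdiff.mpr ⟨hcR, hcY⟩)))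

lemma pair_decomp (P : C5) (h : P.card = 2) (s : Fin 5) (hs : s ∈ P) :
    ∃ t, t ≠ s ∧ P = {s, t} := by
  obtain ⟨x, y, hxy, rfl⟩ := Finset.card_eq_two.mp h
  simp only [Finset.mem_insert, Finset.mem_singleton] at hs
  rcases hs with rfl | rfl
  · exact ⟨y, fun h => hxy h.symm, rfl⟩
  · exact ⟨x, hxy, Finset.pair_comm x s⟩

set_option maxHeartbeats 1000000 in
lemma starLemma (a b : ℕ) (P : Fin a → C5) (Q : Fin b → C5)
    (hP : ∀ i, (P i).card = 2) (hQ : ∀ j, (Q j).card = 2)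
    (hcon : a + 3 * b ≤ 9 ∨ (a = 1 ∧ b = 3)) (hab : 3 ≤ a + b) :
    ∃ (fw : C5) (fx : Fin a → C5) (fy fz : Fin b → C5),
      fw.card = 2 ∧ (∀ i, (fx i).card = 2) ∧ (∀ j, (fy j).card = 2) ∧
      (∀ j, (fz j).card = 2) ∧
      (∀ c : Fin 5, c ∈ fw ∨ (∃ i, c ∈ fx i) ∨ (∃ j, c ∈ fy j)) ∧
      (∀ i (c : Fin 5), c ∈ fw ∨ c ∈ fx i ∨ c ∈ P i) ∧
      (∀ j (c : Fin 5), c ∈ fw ∨ c ∈ fy j ∨ c ∈ fz j) ∧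
      (∀ j (c : Fin 5), c ∈ fy j ∨ c ∈ fz j ∨ c ∈ Q j) := by
  classical
  rcases Nat.eq_zero_or_pos b with hb0 | hbpos
  · -- b = 0 : star with only leaves; a ≥ 3
    subst hb0
    have ha3 : 3 ≤ a := by omega
    have h9 : a + 3 * 0 ≤ 9 := by
      rcases hcon with h | ⟨-, h⟩
      · omega
      · omega
    by_cases hcommon : ∃ s, ∀ i, s ∈ P i
    · obtain ⟨s, hs⟩ := hcommon
      choose t ht1 ht2 using fun i => pair_decomp (P i) (hP i) s (hs i)
      by_cases hdiff : ∃ i j, t i ≠ t j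
      · -- (Ia)
        obtain ⟨i0, j0, hij⟩ := hdiff
        have hij' : i0 ≠ j0 := fun h => hij (h ▸ rfl)
        set A := t i0 with hA
        set B := t j0 with hB
        have hABs : ({s, A, B} : C5).card ≤ 3 := by
          apply le_trans (Finset.card_insert_le _ _)
          have := Finset.card_insert_le A ({B} : C5)
          simp at this ⊢
          omega
        have hcompl : 2 ≤ (({s, A, B} : C5)ᶜ).card := by
          rw [Finset.card_compl]
          have h5 : Fintype.card (Fin 5) = 5 := by simp
          omega
        obtain ⟨c, hc⟩ := Finset.card_pos.mp (by omega : 0 < (({s, A, B} : C5)ᶜ).card)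
        rw [Finset.mem_compl] at hc
        simp only [Finset.mem_insert, Finset.mem_singleton, not_or] at hc
        obtain ⟨hcs, hcA, hcB⟩ := hc
        have hsA : s ≠ A := fun h => ht1 i0 h.symm
        have hsB : s ≠ B := fun h => ht1 j0 h.symm
        have hAB : A ≠ B := hij
        have h4card : ({s, B, A, c} : C5).card = 4 := by
          rw [Finset.card_insert_of_notMem (by simp [hsB, hsA, Ne.symm hcs] : s ∉ ({B, A, c} : C5)),
            Finset.card_insert_of_notMem (by simp [hAB.symm, Ne.symm hcB] : B ∉ ({A, c} : C5)),
            Finset.card_pair (Ne.symm hcA)]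
        have hcompl1 : (({s, B, A, c} : C5)ᶜ).card = 1 := by
          rw [Finset.card_compl, h4card]; rfl
        obtain ⟨d, hd⟩ := Finset.card_eq_one.mp hcompl1
        have hdm : d ∉ ({s, B, A, c} : C5) := by
          rw [← Finset.mem_compl, hd]; exact Finset.mem_singleton_self d
        simp only [Finset.mem_insert, Finset.mem_singleton, not_or] at hdm
        obtain ⟨hds, hdB, hdA, hdc⟩ := hdm
        have huniv : ∀ e : Fin 5, e = s ∨ e = B ∨ e = A ∨ e = c ∨ e = d := by
          intro e
          by_cases he : e ∈ ({s, B, A, c} : C5)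
          · simp only [Finset.mem_insert, Finset.mem_singleton] at he
            tauto
          · have : e ∈ ({s, B, A, c} : C5)ᶜ := Finset.mem_compl.mpr he
            rw [hd] at this
            simp at this
            tauto
        refine ⟨{A, c}, fun k => if k = j0 then {d, s} else {B, d}, fun j => j.elim0,
          fun j => j.elim0,
          Finset.card_pair (Ne.symm hcA), ?_, fun j => j.elim0, fun j => j.elim0, ?_, ?_,
          fun j => j.elim0, fun j => j.elim0⟩
        · intro k
          dsimp only
          split_ifs
          · exact Finset.card_pair hds
          · exact Finset.card_pair (Ne.symm hdB)
        · -- cond_w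
          intro e
          rcases huniv e with rfl | rfl | rfl | rfl | rfl
          · right; left; exact ⟨j0, by simp⟩
          · right; left
            refine ⟨i0, ?_⟩
            dsimp only
            rw [if_neg hij']
            simp
          · left; simp
          · left; simp
          · right; left; exact ⟨j0, by simp⟩
        · -- cond_x
          intro k e
          rcases huniv e with rfl | rfl | rfl | rfl | rfl
          · right; right; exact hs k
          · by_cases hk : k = j0
            · subst hk
              right; right
              rw [ht2 k]
              simp [hB]
            · right; left
              dsimp only
              rw [if_neg hk]
              simp
          · left; simp
          · left; simp
          · right; left
            dsimp only
            split_ifs <;> simp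
      · -- (Ib) : all t equal
        push_neg at hdiff
        have ha0 : 0 < a := by omega
        set i0 : Fin a := ⟨0, ha0⟩ with hi0
        set i1 : Fin a := ⟨1, by omega⟩ with hi1
        have hi01 : i1 ≠ i0 := by
          rw [hi0, hi1]
          simp [Fin.mk.injEq]
        set t0 := t i0 with ht0
        have hst0 : ({s, t0} : C5).card = 2 := Finset.card_pair (Ne.symm (ht1 i0))
        have hc3 : (({s, t0} : C5)ᶜ).card = 3 := by
          rw [Finset.card_compl, hst0]; rfl
        obtain ⟨u1, u2, u3, h12, h13, h23, hue⟩ := Finset.card_eq_three.mp hc3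
        have hu : ∀ u ∈ ({u1, u2, u3} : C5), u ≠ s ∧ u ≠ t0 := by
          intro u hum
          have : u ∈ ({s, t0} : C5)ᶜ := hue ▸ hum
          rw [Finset.mem_compl] at this
          simp only [Finset.mem_insert, Finset.mem_singleton, not_or] at this
          exact this
        obtain ⟨hu1s, hu1t⟩ := hu u1 (by simp)
        obtain ⟨hu2s, hu2t⟩ := hu u2 (by simp)
        obtain ⟨hu3s, hu3t⟩ := hu u3 (by simp)
        have huniv : ∀ e : Fin 5, e = s ∨ e = t0 ∨ e = u1 ∨ e = u2 ∨ e = u3 := by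
          intro e
          by_cases he : e ∈ ({s, t0} : C5)
          · simp only [Finset.mem_insert, Finset.mem_singleton] at he
            tauto
          · have : e ∈ ({s, t0} : C5)ᶜ := Finset.mem_compl.mpr he
            rw [hue] at this
            simp only [Finset.mem_insert, Finset.mem_singleton] at this
            tauto
        refine ⟨{u1, u2}, fun k => if k = i0 then {u3, s} else {u3, t0}, fun j => j.elim0,
          fun j => j.elim0,
          Finset.card_pair h12, ?_, fun j => j.elim0, fun j => j.elim0, ?_, ?_,
          fun j => j.elim0, fun j => j.elim0⟩
        · intro k
          dsimp only
          split_ifs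
          · exact Finset.card_pair hu3s
          · exact Finset.card_pair hu3t
        · intro e
          rcases huniv e with rfl | rfl | rfl | rfl | rfl
          · right; left; exact ⟨i0, by simp⟩
          · right; left
            refine ⟨i1, ?_⟩
            dsimp only
            rw [if_neg hi01]
            simp
          · left; simp
          · left; simp
          · right; left; exact ⟨i0, by simp⟩
        · intro k e
          rcases huniv e with rfl | rfl | rfl | rfl | rfl
          · right; right; exact hs k
          · right; right
            rw [ht2 k]
            have : t0 = t k := hdiff i0 k
            rw [this]
            simp
          · left; simp
          · left; simp
          · right; left
            dsimp only
            split_ifs <;> simp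
    · -- (II) : no common color
      obtain ⟨fw, hfwc, hfwP, -⟩ := exists_goodPair P Q hQ h9
      set F : Fin a → C5 := fun i => (P i)ᶜ \ fw with hFdef
      have hFsub : ∀ i, F i ⊆ fwᶜ := fun i => (F_props fw (P i) hfwc (hP i) (hfwP i)).1
      have hFcard : ∀ i, (F i).card ≤ 2 := fun i => (F_props fw (P i) hfwc (hP i) (hfwP i)).2
      have hS3 : (fwᶜ).card = 3 := compl_card3 fw hfwc
      choose fxd hfxd1 hfxd2 hfxd3 using fun i =>
        padTo (F i) fwᶜ (hFsub i) (hFcard i) (by omega)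
      have hFsubfx : ∀ k e, e ∉ fw → e ∉ P k → e ∈ F k := by
        intro k e hefw heP
        rw [hFdef]
        exact Finset.mem_sdiff.mpr ⟨Finset.mem_compl.mpr heP, hefw⟩
      by_cases hsmall : ∃ i, (F i).card ≤ 1
      · -- (IIa)
        obtain ⟨i0, hi0⟩ := hsmall
        have hex1 : ∃ i1 : Fin a, i1 ≠ i0 := by
          by_cases h : i0 = ⟨0, by omega⟩
          · exact ⟨⟨1, by omega⟩, by rw [h]; simp [Fin.mk.injEq]⟩
          · exact ⟨⟨0, by omega⟩, fun hh => h hh.symm⟩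
        obtain ⟨i1, hi10⟩ := hex1
        set X := fxd i1 with hX
        have hSX : (fwᶜ \ X).card = 1 := by
          rw [Finset.card_sdiff_of_subset (hfxd2 i1), hS3, hfxd3 i1]
        have hYF : ((fwᶜ \ X) ∪ F i0).card ≤ 2 := by
          apply le_trans (Finset.card_union_le _ _)
          omega
        obtain ⟨Y, hY1, -, hY3⟩ := padTo ((fwᶜ \ X) ∪ F i0) univ (Finset.subset_univ _)
          hYF (by simp)
        refine ⟨fw, fun k => if k = i0 then Y else if k = i1 then X else fxd k,
          fun j => j.elim0, fun j => j.elim0,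
          hfwc, ?_, fun j => j.elim0, fun j => j.elim0, ?_, ?_,
          fun j => j.elim0, fun j => j.elim0⟩
        · intro k
          dsimp only
          split_ifs
          · exact hY3
          · exact hfxd3 i1
          · exact hfxd3 k
        · intro e
          by_cases hefw : e ∈ fw
          · exact Or.inl hefw
          right; left
          by_cases heX : e ∈ X
          · refine ⟨i1, ?_⟩
            dsimp only
            rw [if_neg hi10, if_pos rfl]
            exact heX
          · refine ⟨i0, ?_⟩
            dsimp only
            rw [if_pos rfl]
            exact hY1 (Finset.mem_union_left _
              (Finset.mem_sdiff.mpr ⟨Finset.mem_compl.mpr hefw, heX⟩))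
        · intro k e
          by_cases hefw : e ∈ fw
          · exact Or.inl hefw
          by_cases heP : e ∈ P k
          · exact Or.inr (Or.inr heP)
          right; left
          have heF : e ∈ F k := hFsubfx k e hefw heP
          dsimp only
          split_ifs with h1 h2
          · exact hY1 (Finset.mem_union_right _ (h1 ▸ heF))
          · exact (hfxd1 i1) (h2 ▸ heF)
          · exact (hfxd1 k) heF
      · push_neg at hsmall
        have hF2 : ∀ i, (F i).card = 2 := by
          intro i
          have := hFcard i
          have := hsmall i
          omega
        by_cases hdiff : ∃ i j, F i ≠ F j
        · -- (IIb)
          obtain ⟨i0, j0, hij⟩ := hdiff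
          have hint : (F i0 ∩ F j0).card ≤ 1 := by
            by_contra hcon2
            push_neg at hcon2
            have e1 : F i0 ∩ F j0 = F i0 := Finset.eq_of_subset_of_card_le
              Finset.inter_subset_left (by have := hF2 i0; omega)
            have e2 : F i0 ∩ F j0 = F j0 := Finset.eq_of_subset_of_card_le
              Finset.inter_subset_right (by have := hF2 j0; omega)
            exact hij (e1 ▸ e2)
          have hucard : 3 ≤ (F i0 ∪ F j0).card := by
            have := Finset.card_union_add_card_inter (F i0) (F j0)
            have h1 := hF2 i0
            have h2 := hF2 j0
            omega
          have hueq : F i0 ∪ F j0 = fwᶜ := by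
            apply Finset.eq_of_subset_of_card_le
              (Finset.union_subset (hFsub i0) (hFsub j0))
            omega
          refine ⟨fw, fxd, fun j => j.elim0, fun j => j.elim0,
            hfwc, hfxd3, fun j => j.elim0, fun j => j.elim0, ?_, ?_,
            fun j => j.elim0, fun j => j.elim0⟩
          · intro e
            by_cases hefw : e ∈ fw
            · exact Or.inl hefw
            right; left
            have : e ∈ F i0 ∪ F j0 := hueq ▸ Finset.mem_compl.mpr hefw
            rcases Finset.mem_union.mp this with h | h
            · exact ⟨i0, hfxd1 i0 h⟩
            · exact ⟨j0, hfxd1 j0 h⟩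
          · intro k e
            by_cases hefw : e ∈ fw
            · exact Or.inl hefw
            by_cases heP : e ∈ P k
            · exact Or.inr (Or.inr heP)
            · exact Or.inr (Or.inl (hfxd1 k (hFsubfx k e hefw heP)))
        · -- (IIc) : contradiction
          exfalso
          push_neg at hdiff
          set i0 : Fin a := ⟨0, by omega⟩ with hi0
          have hsd : (fwᶜ \ F i0).card = 1 := by
            rw [Finset.card_sdiff_of_subset (hFsub i0), hS3, hF2 i0]
          obtain ⟨s0, hs0⟩ := Finset.card_pos.mp (by omega : 0 < (fwᶜ \ F i0).card)
          rw [Finset.mem_sdiff, Finset.mem_compl] at hs0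
          obtain ⟨hs0fw, hs0F⟩ := hs0
          apply hcommon
          refine ⟨s0, fun i => ?_⟩
          by_contra hs0P
          exact hs0F (hdiff i0 i ▸ hFsubfx i s0 hs0fw hs0P)
  · -- b > 0
    have hfw : ∃ fw : C5, fw.card = 2 ∧ (∀ i, fw ≠ P i) ∧ (∀ j, (fw ∩ Q j).Nonempty) := by
      rcases hcon with h9 | ⟨ha1, hb3⟩
      · exact exists_goodPair P Q hQ h9
      · subst ha1; subst hb3
        obtain ⟨fw, h1, h2, h3, h4, h5⟩ := exists_goodPair13 (P 0) (Q 0) (Q 1) (Q 2)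
          (hP 0) (hQ 0) (hQ 1) (hQ 2)
        refine ⟨fw, h1, ?_, ?_⟩
        · intro i; fin_cases i; exact h2
        · intro j; fin_cases j <;> assumption
    obtain ⟨fw, hfwc, hfwP, hfwQ⟩ := hfw
    set F : Fin a → C5 := fun i => (P i)ᶜ \ fw with hFdef
    have hFsub : ∀ i, F i ⊆ fwᶜ := fun i => (F_props fw (P i) hfwc (hP i) (hfwP i)).1
    have hFcard : ∀ i, (F i).card ≤ 2 := fun i => (F_props fw (P i) hfwc (hP i) (hfwP i)).2
    have hS3 : (fwᶜ).card = 3 := compl_card3 fw hfwc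
    choose fxd hfxd1 hfxd2 hfxd3 using fun i =>
      padTo (F i) fwᶜ (hFsub i) (hFcard i) (by omega)
    have hFsubfx : ∀ k e, e ∉ fw → e ∉ P k → e ∈ F k := by
      intro k e hefw heP
      rw [hFdef]
      exact Finset.mem_sdiff.mpr ⟨Finset.mem_compl.mpr heP, hefw⟩
    -- choose fy with coverage
    have hfy : ∃ fy : Fin b → C5, (∀ j, fy j ⊆ fwᶜ) ∧ (∀ j, (fy j).card = 2) ∧
        (∀ e, e ∈ fwᶜ → (∃ i, e ∈ fxd i) ∨ (∃ j, e ∈ fy j)) := by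
      rcases Nat.eq_zero_or_pos a with ha0 | hapos
      · -- a = 0 : b ≥ 3, use two distinct fy's
        subst ha0
        obtain ⟨T, -, hT2, hT3⟩ := padTo ∅ fwᶜ (Finset.empty_subset _) (by simp) (by omega)
        have hsd : (fwᶜ \ T).card = 1 := by
          rw [Finset.card_sdiff_of_subset hT2, hS3, hT3]
        obtain ⟨Y, hY1, hY2, hY3⟩ := padTo (fwᶜ \ T) fwᶜ Finset.sdiff_subset
          (by omega) (by omega)
        refine ⟨fun j => if j = ⟨0, hbpos⟩ then T else Y, ?_, ?_, ?_⟩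
        · intro j; dsimp only; split_ifs
          · exact hT2
          · exact hY2
        · intro j; dsimp only; split_ifs
          · exact hT3
          · exact hY3
        · intro e he
          right
          by_cases heT : e ∈ T
          · exact ⟨⟨0, hbpos⟩, by simp [heT]⟩
          · refine ⟨⟨1, by omega⟩, ?_⟩
            dsimp only
            rw [if_neg (by simp [Fin.mk.injEq])]
            exact hY1 (Finset.mem_sdiff.mpr ⟨he, heT⟩)
      · -- a > 0 : use fxd i0 for coverage
        set i0 : Fin a := ⟨0, hapos⟩ with hi0
        have hsd : (fwᶜ \ fxd i0).card = 1 := by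
          rw [Finset.card_sdiff_of_subset (hfxd2 i0), hS3, hfxd3 i0]
        obtain ⟨Y, hY1, hY2, hY3⟩ := padTo (fwᶜ \ fxd i0) fwᶜ Finset.sdiff_subset
          (by omega) (by omega)
        refine ⟨fun _ => Y, fun _ => hY2, fun _ => hY3, ?_⟩
        intro e he
        by_cases heX : e ∈ fxd i0
        · exact Or.inl ⟨i0, heX⟩
        · exact Or.inr ⟨⟨0, hbpos⟩, hY1 (Finset.mem_sdiff.mpr ⟨he, heX⟩)⟩
    obtain ⟨fy, hfyS, hfyc, hcover⟩ := hfy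
    choose fz hfz1 hfz2 hfz3 using fun j =>
      legAssign fw (Q j) (fy j) hfwc (hQ j) (hfwQ j) (hfyS j) (hfyc j)
    refine ⟨fw, fxd, fy, fz, hfwc, hfxd3, hfyc, hfz1, ?_, ?_, hfz2, hfz3⟩
    · intro e
      by_cases hefw : e ∈ fw
      · exact Or.inl hefw
      · exact Or.inr (hcover e (Finset.mem_compl.mpr hefw))
    · intro k e
      by_cases hefw : e ∈ fw
      · exact Or.inl hefw
      by_cases heP : e ∈ P k
      · exact Or.inr (Or.inr heP)
      · exact Or.inr (Or.inl (hfxd1 k (hFsubfx k e hefw heP)))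

-- ncard transfer
lemma subgraph_ncard_one {V W : Type*} {G : SimpleGraph V} (S : G.Subgraph)
    (G' : SimpleGraph W) (φ : S.coe ≃g G') (v : S.verts) (w : W)
    (h : G'.neighborSet (φ v) = {w}) : (S.neighborSet ↑v).ncard = 1 := by
  have e1 : (S.neighborSet ↑v : Set V) ≃ (G'.neighborSet (φ v) : Set W) :=
    (SimpleGraph.Subgraph.coeNeighborSetEquiv v).symm.trans (φ.mapNeighborSet v)
  rw [← Nat.card_coe_set_eq, Nat.card_congr e1, Nat.card_coe_set_eq, h,
    Set.ncard_singleton]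

lemma pathGraph_nbr0 (n : ℕ) (hn : 3 ≤ n) :
    (pathGraph n).neighborSet ⟨0, by omega⟩ = {(⟨1, by omega⟩ : Fin n)} := by
  ext u
  simp only [SimpleGraph.mem_neighborSet, pathGraph_adj, Set.mem_singleton_iff]
  constructor
  · rintro (h | h)
    · exact Fin.ext (by simpa using h.symm)
    · simp at h
  · rintro rfl
    left
    rfl

lemma pathGraph_nbrLast (n : ℕ) (hn : 3 ≤ n) :
    (pathGraph n).neighborSet ⟨n-1, by omega⟩ = {(⟨n-2, by omega⟩ : Fin n)} := by
  ext u
  simp only [SimpleGraph.mem_neighborSet, pathGraph_adj, Set.mem_singleton_iff]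
  constructor
  · rintro (h | h)
    · have := u.isLt
      have h' : (n : ℕ) - 1 + 1 = (u : ℕ) := h
      omega
    · apply Fin.ext
      have := u.isLt
      have h' : (u : ℕ) + 1 = n - 1 := h
      show (u : ℕ) = n - 2
      omega
  · rintro rfl
    right
    show (n : ℕ) - 2 + 1 = n - 1
    omega

lemma starGraph_adj_wx {α β : ℕ} (i : Fin α) :
    (starGraph α β).Adj (Sum.inl ()) (Sum.inr (Sum.inl i)) := by
  rw [_root_.starGraph, SimpleGraph.fromEdgeSet_adj]
  exact ⟨Or.inl (Or.inl ⟨i, rfl⟩), by simp⟩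

lemma starGraph_adj_wy {α β : ℕ} (j : Fin β) :
    (starGraph α β).Adj (Sum.inl ()) (Sum.inr (Sum.inr (Sum.inl j))) := by
  rw [_root_.starGraph, SimpleGraph.fromEdgeSet_adj]
  exact ⟨Or.inl (Or.inr ⟨j, rfl⟩), by simp⟩

lemma starGraph_adj_yz {α β : ℕ} (j : Fin β) :
    (starGraph α β).Adj (Sum.inr (Sum.inr (Sum.inl j))) (Sum.inr (Sum.inr (Sum.inr j))) := by
  rw [_root_.starGraph, SimpleGraph.fromEdgeSet_adj]
  exact ⟨Or.inr ⟨j, rfl⟩, by simp⟩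

lemma starGraph_nbr_x {α β : ℕ} (i : Fin α) :
    (starGraph α β).neighborSet (Sum.inr (Sum.inl i)) = {Sum.inl ()} := by
  ext u
  simp only [SimpleGraph.mem_neighborSet, Set.mem_singleton_iff, _root_.starGraph,
    SimpleGraph.fromEdgeSet_adj, Set.mem_union, Set.mem_setOf_eq, Sym2.eq_iff]
  constructor
  · rintro ⟨(⟨i', h⟩ | ⟨j, h⟩) | ⟨j, h⟩, hne⟩ <;> simp_all
  · rintro rfl
    exact ⟨Or.inl (Or.inl ⟨i, Or.inr ⟨rfl, rfl⟩⟩), by simp⟩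

lemma starGraph_nbr_z {α β : ℕ} (j : Fin β) :
    (starGraph α β).neighborSet (Sum.inr (Sum.inr (Sum.inr j))) =
      {Sum.inr (Sum.inr (Sum.inl j))} := by
  ext u
  simp only [SimpleGraph.mem_neighborSet, Set.mem_singleton_iff, _root_.starGraph,
    SimpleGraph.fromEdgeSet_adj, Set.mem_union, Set.mem_setOf_eq, Sym2.eq_iff]
  constructor
  · rintro ⟨(⟨i', h⟩ | ⟨j', h⟩) | ⟨j', h⟩, hne⟩ <;> simp_all
  · rintro rfl
    exact ⟨Or.inr ⟨j, Or.inr ⟨rfl, rfl⟩⟩, by simp⟩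

end AuxiliaryLemmas

set_option maxHeartbeats 1000000 in
theorem stmt4 {V : Type*} (G : SimpleGraph V) (H S : G.Subgraph)
    (hdisj : Disjoint H.verts S.verts)
    (α β : ℕ) (hαβ : α + 3 * β ≤ 9 ∨ (α = 1 ∧ β = 3))
    (hH : Configurable H.coe)
    (hS : (∃ n, 3 ≤ n ∧ Nonempty (S.coe ≃g pathGraph n)) ∨
          (3 ≤ α + β ∧ Nonempty (S.coe ≃g starGraph α β)))
    (hdeg : ∀ v ∈ S.verts, (S.neighborSet v).ncard = 1 → ∃ u ∈ H.verts, G.Adj v u) :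
    Configurable (G.induce (H.verts ∪ S.verts)) := by
  classical
  obtain ⟨f, hfcard, hfcov⟩ := hH
  have hnotH : ∀ w : S.verts, (w : V) ∉ H.verts := fun w hw =>
    Set.disjoint_left.mp hdisj hw w.2
  have hmemS : ∀ w : S.verts, (w : V) ∈ H.verts ∪ S.verts := fun w => Or.inr w.2
  -- adjacency transfer lemmas
  have hadjSG : ∀ w w' : S.verts, S.coe.Adj w w' →
      (G.induce (H.verts ∪ S.verts)).Adj ⟨↑w, hmemS w⟩ ⟨↑w', hmemS w'⟩ := by
    intro w w' h
    have h3 : G.Adj ↑w ↑w' := S.adj_sub h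
    exact h3
  have hadjHG : ∀ (u v' : V) (hu : u ∈ H.verts) (hv : v' ∈ S.verts), G.Adj v' u →
      (G.induce (H.verts ∪ S.verts)).Adj ⟨u, Or.inl hu⟩ ⟨v', Or.inr hv⟩ := by
    intro u v' hu hv h
    exact h.symm
  rcases hS with ⟨n, hn3, ⟨φ⟩⟩ | ⟨hab, ⟨φ⟩⟩
  · -- PATH CASE
    set vS0 : S.verts := φ.symm ⟨0, by omega⟩ with hvS0
    set vSl : S.verts := φ.symm ⟨n-1, by omega⟩ with hvSl
    have hn0 : (S.neighborSet ↑vS0).ncard = 1 := by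
      apply subgraph_ncard_one S _ φ vS0 ⟨1, by omega⟩
      rw [hvS0, RelIso.apply_symm_apply]
      exact pathGraph_nbr0 n hn3
    have hnl : (S.neighborSet ↑vSl).ncard = 1 := by
      apply subgraph_ncard_one S _ φ vSl ⟨n-2, by omega⟩
      rw [hvSl, RelIso.apply_symm_apply]
      exact pathGraph_nbrLast n hn3
    obtain ⟨u0, hu0H, hu0adj⟩ := hdeg ↑vS0 vS0.2 hn0
    obtain ⟨u1, hu1H, hu1adj⟩ := hdeg ↑vSl vSl.2 hnl
    obtain ⟨g, hgc, hg0, hgi, hgend⟩ := pathLemma n hn3 (f ⟨u0, hu0H⟩) (f ⟨u1, hu1H⟩)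
      (hfcard _) (hfcard _)
    refine ⟨fun v => if h : (v : V) ∈ H.verts then f ⟨v, h⟩
      else g ((φ ⟨v, v.2.resolve_left h⟩ : Fin n) : ℕ), ?_, ?_⟩
    · intro v
      dsimp only
      split_ifs
      · exact hfcard _
      · exact hgc _
    · intro v c
      by_cases hv : (v : V) ∈ H.verts
      · obtain ⟨u, hu, hcu⟩ := hfcov ⟨↑v, hv⟩ c
        refine ⟨⟨↑u, Or.inl u.2⟩, ?_, ?_⟩
        · rcases hu with h | h
          · left
            exact Subtype.ext (show ((u : V) : V) = ↑v from congrArg Subtype.val h)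
          · right
            exact H.adj_sub h
        · dsimp only
          rw [dif_pos u.2]
          exact hcu
      · have hvS : (v : V) ∈ S.verts := v.2.resolve_left hv
        set w : S.verts := ⟨↑v, hvS⟩ with hw
        have hFS : ∀ w' : S.verts, (fun v : ↥(H.verts ∪ S.verts) =>
            if h : (v : V) ∈ H.verts then f ⟨v, h⟩
            else g ((φ ⟨v, v.2.resolve_left h⟩ : Fin n) : ℕ)) ⟨↑w', hmemS w'⟩
            = g ((φ w' : Fin n) : ℕ) := by
          intro w'
          dsimp only
          rw [dif_neg (hnotH w')]
        have hveq : v = ⟨↑w, hmemS w⟩ := Subtype.ext rfl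
        set I : Fin n := φ w with hI
        by_cases h0 : (I : ℕ) = 0
        · -- left endpoint
          have hwv0 : w = vS0 := by
            rw [hvS0]
            apply φ.injective
            rw [RelIso.apply_symm_apply, ← hI]
            exact Fin.ext h0
          have hc5 : c ∈ g 0 ∪ g 1 ∪ f ⟨u0, hu0H⟩ := hg0 ▸ Finset.mem_univ c
          rcases Finset.mem_union.mp hc5 with hc' | hc'
          · rcases Finset.mem_union.mp hc' with hc'' | hc''
            · refine ⟨v, Or.inl rfl, ?_⟩
              rw [hveq, hFS w, ← hI, h0]
              exact hc''
            · set w1 : S.verts := φ.symm ⟨1, by omega⟩ with hw1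
              refine ⟨⟨↑w1, hmemS w1⟩, Or.inr ?_, ?_⟩
              · rw [hveq]
                apply hadjSG
                rw [← φ.map_rel_iff, RelIso.apply_symm_apply, ← hI]
                rw [pathGraph_adj]
                right
                simp [h0]
              · rw [hFS w1, hw1, RelIso.apply_symm_apply]
                exact hc''
          · refine ⟨⟨u0, Or.inl hu0H⟩, Or.inr ?_, ?_⟩
            · rw [hveq]
              refine hadjHG u0 ↑w hu0H w.2 ?_
              have hvv : (↑w : V) = ↑vS0 := congrArg Subtype.val hwv0
              rw [hvv]
              exact hu0adj
            · dsimp only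
              rw [dif_pos hu0H]
              exact hc'
        · by_cases hlast : (I : ℕ) = n - 1
          · -- right endpoint
            have hwvl : w = vSl := by
              rw [hvSl]
              apply φ.injective
              rw [RelIso.apply_symm_apply, ← hI]
              exact Fin.ext hlast
            have hc5 : c ∈ g (n-2) ∪ g (n-1) ∪ f ⟨u1, hu1H⟩ := hgend ▸ Finset.mem_univ c
            rcases Finset.mem_union.mp hc5 with hc' | hc'
            · rcases Finset.mem_union.mp hc' with hc'' | hc''
              · set w2 : S.verts := φ.symm ⟨n-2, by omega⟩ with hw2
                refine ⟨⟨↑w2, hmemS w2⟩, Or.inr ?_, ?_⟩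
                · rw [hveq]
                  apply hadjSG
                  rw [← φ.map_rel_iff, RelIso.apply_symm_apply, ← hI]
                  rw [pathGraph_adj]
                  left
                  simp [hlast]
                  omega
                · rw [hFS w2, hw2, RelIso.apply_symm_apply]
                  exact hc''
              · refine ⟨v, Or.inl rfl, ?_⟩
                rw [hveq, hFS w, ← hI, hlast]
                exact hc''
            · refine ⟨⟨u1, Or.inl hu1H⟩, Or.inr ?_, ?_⟩
              · rw [hveq]
                refine hadjHG u1 ↑w hu1H w.2 ?_
                have hvv : (↑w : V) = ↑vSl := congrArg Subtype.val hwvl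
                rw [hvv]
                exact hu1adj
              · dsimp only
                rw [dif_pos hu1H]
                exact hc'
          · -- interior
            have hI1 : 1 ≤ (I : ℕ) := by omega
            have hI2 : (I : ℕ) ≤ n - 2 := by
              have := I.isLt
              omega
            have hc5 : c ∈ g ((I:ℕ)-1) ∪ g (I:ℕ) ∪ g ((I:ℕ)+1) :=
              (hgi (I:ℕ) hI1 hI2) ▸ Finset.mem_univ c
            rcases Finset.mem_union.mp hc5 with hc' | hc'
            · rcases Finset.mem_union.mp hc' with hc'' | hc''
              · set wm : S.verts := φ.symm ⟨(I:ℕ)-1, by omega⟩ with hwm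
                refine ⟨⟨↑wm, hmemS wm⟩, Or.inr ?_, ?_⟩
                · rw [hveq]
                  apply hadjSG
                  rw [← φ.map_rel_iff, RelIso.apply_symm_apply]
                  rw [pathGraph_adj]
                  left
                  show (I:ℕ) - 1 + 1 = (I:ℕ)
                  omega
                · rw [hFS wm, hwm, RelIso.apply_symm_apply]
                  exact hc''
              · refine ⟨v, Or.inl rfl, ?_⟩
                rw [hveq, hFS w, ← hI]
                exact hc''
            · set wp : S.verts := φ.symm ⟨(I:ℕ)+1, by omega⟩ with hwp
              refine ⟨⟨↑wp, hmemS wp⟩, Or.inr ?_, ?_⟩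
              · rw [hveq]
                apply hadjSG
                rw [← φ.map_rel_iff, RelIso.apply_symm_apply]
                rw [pathGraph_adj]
                right
                show (I:ℕ) + 1 = (I:ℕ) + 1
                rfl
              · rw [hFS wp, hwp, RelIso.apply_symm_apply]
                exact hc'
  · -- STAR CASE
    have hncx : ∀ i : Fin α, (S.neighborSet ↑(φ.symm (Sum.inr (Sum.inl i)))).ncard = 1 := by
      intro i
      apply subgraph_ncard_one S _ φ _ (Sum.inl ())
      rw [RelIso.apply_symm_apply]
      exact starGraph_nbr_x i
    have hncz : ∀ j : Fin β, (S.neighborSet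
        ↑(φ.symm (Sum.inr (Sum.inr (Sum.inr j))))).ncard = 1 := by
      intro j
      apply subgraph_ncard_one S _ φ _ (Sum.inr (Sum.inr (Sum.inl j)))
      rw [RelIso.apply_symm_apply]
      exact starGraph_nbr_z j
    choose ux hux1 hux2 using fun i : Fin α =>
      hdeg ↑(φ.symm (Sum.inr (Sum.inl i))) (φ.symm (Sum.inr (Sum.inl i))).2 (hncx i)
    choose uz huz1 huz2 using fun j : Fin β =>
      hdeg ↑(φ.symm (Sum.inr (Sum.inr (Sum.inr j)))) (φ.symm (Sum.inr (Sum.inr (Sum.inr j)))).2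
        (hncz j)
    obtain ⟨fw, fx, fy, fz, hfwc, hfxc, hfyc, hfzc, hcw, hcx, hcy, hcz⟩ :=
      starLemma α β (fun i => f ⟨ux i, hux1 i⟩) (fun j => f ⟨uz j, huz1 j⟩)
        (fun i => hfcard _) (fun j => hfcard _) hαβ hab
    set q : (Unit ⊕ Fin α ⊕ Fin β ⊕ Fin β) → C5 := fun t =>
      match t with
      | Sum.inl _ => fw
      | Sum.inr (Sum.inl i) => fx i
      | Sum.inr (Sum.inr (Sum.inl j)) => fy j
      | Sum.inr (Sum.inr (Sum.inr j)) => fz j with hq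
    refine ⟨fun v => if h : (v : V) ∈ H.verts then f ⟨v, h⟩
      else q (φ ⟨v, v.2.resolve_left h⟩), ?_, ?_⟩
    · intro v
      dsimp only
      split_ifs with h
      · exact hfcard _
      · generalize φ _ = t
        rcases t with t0 | i | j | j
        · exact hfwc
        · exact hfxc i
        · exact hfyc j
        · exact hfzc j
    · intro v c
      by_cases hv : (v : V) ∈ H.verts
      · obtain ⟨u, hu, hcu⟩ := hfcov ⟨↑v, hv⟩ c
        refine ⟨⟨↑u, Or.inl u.2⟩, ?_, ?_⟩
        · rcases hu with h | h
          · left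
            exact Subtype.ext (show ((u : V) : V) = ↑v from congrArg Subtype.val h)
          · right
            exact H.adj_sub h
        · dsimp only
          rw [dif_pos u.2]
          exact hcu
      · have hvS : (v : V) ∈ S.verts := v.2.resolve_left hv
        set w : S.verts := ⟨↑v, hvS⟩ with hw
        have hFS : ∀ w' : S.verts, (fun v : ↥(H.verts ∪ S.verts) =>
            if h : (v : V) ∈ H.verts then f ⟨v, h⟩
            else q (φ ⟨v, v.2.resolve_left h⟩)) ⟨↑w', hmemS w'⟩
            = q (φ w') := by
          intro w'
          dsimp only
          rw [dif_neg (hnotH w')]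
        have hveq : v = ⟨↑w, hmemS w⟩ := Subtype.ext rfl
        -- adjacency producer between S-vertices via star adjacency
        have hadjStar : ∀ w1 w2 : S.verts, (starGraph α β).Adj (φ w1) (φ w2) →
            (G.induce (H.verts ∪ S.verts)).Adj ⟨↑w1, hmemS w1⟩ ⟨↑w2, hmemS w2⟩ :=
          fun w1 w2 h => hadjSG w1 w2 (φ.map_rel_iff.mp h)
        rcases hφw : φ w with t0 | i | j | j
        · -- center w
          rcases hcw c with hc | ⟨i, hc⟩ | ⟨j, hc⟩
          · refine ⟨v, Or.inl rfl, ?_⟩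
            rw [hveq, hFS w, hφw]
            exact hc
          · refine ⟨⟨↑(φ.symm (Sum.inr (Sum.inl i))), hmemS _⟩, Or.inr ?_, ?_⟩
            · rw [hveq]
              apply hadjStar
              rw [RelIso.apply_symm_apply, hφw]
              exact (starGraph_adj_wx i).symm
            · rw [hFS _, RelIso.apply_symm_apply]
              exact hc
          · refine ⟨⟨↑(φ.symm (Sum.inr (Sum.inr (Sum.inl j)))), hmemS _⟩, Or.inr ?_, ?_⟩
            · rw [hveq]
              apply hadjStar
              rw [RelIso.apply_symm_apply, hφw]
              exact (starGraph_adj_wy j).symm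
            · rw [hFS _, RelIso.apply_symm_apply]
              exact hc
        · -- leaf x i
          have hwx : w = φ.symm (Sum.inr (Sum.inl i)) := by
            apply φ.injective
            rw [RelIso.apply_symm_apply, hφw]
          rcases hcx i c with hc | hc | hc
          · refine ⟨⟨↑(φ.symm (Sum.inl ())), hmemS _⟩, Or.inr ?_, ?_⟩
            · rw [hveq]
              apply hadjStar
              rw [RelIso.apply_symm_apply, hφw]
              exact starGraph_adj_wx i
            · rw [hFS _, RelIso.apply_symm_apply]
              exact hc
          · refine ⟨v, Or.inl rfl, ?_⟩
            rw [hveq, hFS w, hφw]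
            exact hc
          · refine ⟨⟨ux i, Or.inl (hux1 i)⟩, Or.inr ?_, ?_⟩
            · rw [hveq]
              refine hadjHG (ux i) ↑w (hux1 i) w.2 ?_
              have hvv : (↑w : V) = ↑(φ.symm (Sum.inr (Sum.inl i))) := congrArg Subtype.val hwx
              rw [hvv]
              exact hux2 i
            · dsimp only
              rw [dif_pos (hux1 i)]
              exact hc
        · -- middle y j
          rcases hcy j c with hc | hc | hc
          · refine ⟨⟨↑(φ.symm (Sum.inl ())), hmemS _⟩, Or.inr ?_, ?_⟩
            · rw [hveq]
              apply hadjStar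
              rw [RelIso.apply_symm_apply, hφw]
              exact starGraph_adj_wy j
            · rw [hFS _, RelIso.apply_symm_apply]
              exact hc
          · refine ⟨v, Or.inl rfl, ?_⟩
            rw [hveq, hFS w, hφw]
            exact hc
          · refine ⟨⟨↑(φ.symm (Sum.inr (Sum.inr (Sum.inr j)))), hmemS _⟩, Or.inr ?_, ?_⟩
            · rw [hveq]
              apply hadjStar
              rw [RelIso.apply_symm_apply, hφw]
              exact (starGraph_adj_yz j).symm
            · rw [hFS _, RelIso.apply_symm_apply]
              exact hc
        · -- end z j
          have hwz : w = φ.symm (Sum.inr (Sum.inr (Sum.inr j))) := by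
            apply φ.injective
            rw [RelIso.apply_symm_apply, hφw]
          rcases hcz j c with hc | hc | hc
          · refine ⟨⟨↑(φ.symm (Sum.inr (Sum.inr (Sum.inl j)))), hmemS _⟩, Or.inr ?_, ?_⟩
            · rw [hveq]
              apply hadjStar
              rw [RelIso.apply_symm_apply, hφw]
              exact starGraph_adj_yz j
            · rw [hFS _, RelIso.apply_symm_apply]
              exact hc
          · refine ⟨v, Or.inl rfl, ?_⟩
            rw [hveq, hFS w, hφw]
            exact hc
          · refine ⟨⟨uz j, Or.inl (huz1 j)⟩, Or.inr ?_, ?_⟩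
            · rw [hveq]
              refine hadjHG (uz j) ↑w (huz1 j) w.2 ?_
              have hvv : (↑w : V) = ↑(φ.symm (Sum.inr (Sum.inr (Sum.inr j)))) :=
                congrArg Subtype.val hwz
              rw [hvv]
              exact huz2 j
            · dsimp only
              rw [dif_pos (huz1 j)]
              exact hc
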